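/- Let r ≥ 3 and let a₁,…,a_r, b₁,…,b_r ∈ ℝ², and consider the lines ℓ_{a_i,b_i} in ℝ³ for i = 1,…,r. If all the lines ℓ_{a_1,b_1},…,ℓ_{a_r,b_r} lie in a common plane of ℝ³, then there exists an orientation-reversing isometry T of ℝ² (i.e., an isometry whose linear part has determinant −1) such that T(a_i) = b_i for every i = 1,…,r; in particular the sequences (a₁,…,a_r) and (b₁,…,b_r) are congruent. -/

import Mathlib

set_option maxHeartbeats 800000


/-- Points of the plane `ℝ²` with the Euclidean norm. -/
abbrev Pt := EuclideanSpace ℝ (Fin 2)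

/-- Counterclockwise rotation of a vector of `ℝ²` by `π/2`: `(x, y)^⊥ = (-y, x)`. -/
noncomputable def perp (v : Pt) : Pt := WithLp.toLp 2 ![-(v 1), v 0]

/-- The line `ℓ_{a,b} = { ((a+b)/2 + t·((a−b)/2)^⊥, t) : t ∈ ℝ }` in `ℝ³ = ℝ² × ℝ`. -/
noncomputable def lineOf (a b : Pt) : Set (Pt × ℝ) :=
  {x | ∃ t : ℝ, x = ((2⁻¹ : ℝ) • (a + b) + t • perp ((2⁻¹ : ℝ) • (a - b)), t)}

/-- The direction vector `(((a−b)/2)^⊥, 1)` of the line `ℓ_{a,b}`. -/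
noncomputable def dirOf (a b : Pt) : Pt × ℝ := (perp ((2⁻¹ : ℝ) • (a - b)), 1)

/-- `T : ℝ² → ℝ²` is an isometry (a distance-preserving bijection of the plane,
hence affine with norm-preserving linear part) with linear part of determinant
`e ∈ {1, -1}`. -/
def IsIsometryWithDet (e : ℝ) (T : Pt → Pt) : Prop :=
  ∃ (A : Pt →ₗ[ℝ] Pt) (w : Pt),
    (∀ x : Pt, ‖A x‖ = ‖x‖) ∧ LinearMap.det A = e ∧ ∀ x : Pt, T x = A x + w

/-- Decomposition of a point of the plane in the standard basis. -/
lemma pt_decomp (y : Pt) :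
    y = y 0 • (EuclideanSpace.single 0 1 : Pt) + y 1 • (EuclideanSpace.single 1 1 : Pt) := by
  ext j
  fin_cases j <;>
    simp [PiLp.add_apply, PiLp.smul_apply, EuclideanSpace.single_apply]

/-- The explicit reflection with matrix `[[α, β], [β, -α]]`. -/
noncomputable def reflMap (α β : ℝ) : Pt →ₗ[ℝ] Pt where
  toFun x := WithLp.toLp 2 ![α * x 0 + β * x 1, β * x 0 - α * x 1]
  map_add' x y := by
    ext j
    fin_cases j <;> simp [PiLp.add_apply] <;> ring
  map_smul' c x := by
    ext j
    fin_cases j <;> simp [PiLp.smul_apply] <;> ring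

lemma reflMap_apply (α β : ℝ) (x : Pt) (j : Fin 2) :
    reflMap α β x j = ![α * x 0 + β * x 1, β * x 0 - α * x 1] j := rfl

lemma reflMap_norm (α β : ℝ) (hαβ : α ^ 2 + β ^ 2 = 1) (x : Pt) :
    ‖reflMap α β x‖ = ‖x‖ := by
  rw [EuclideanSpace.norm_eq, EuclideanSpace.norm_eq]
  congr 1
  rw [Fin.sum_univ_two, Fin.sum_univ_two]
  simp only [Real.norm_eq_abs, sq_abs, reflMap_apply, Matrix.cons_val_zero,
    Matrix.cons_val_one, Matrix.head_cons]
  linear_combination (x 0 ^ 2 + x 1 ^ 2) * hαβ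

lemma reflMap_det (α β : ℝ) (hαβ : α ^ 2 + β ^ 2 = 1) :
    LinearMap.det (reflMap α β) = -1 := by
  rw [← LinearMap.det_toMatrix (PiLp.basisFun 2 ℝ (Fin 2)), Matrix.det_fin_two]
  simp only [LinearMap.toMatrix_apply, PiLp.basisFun_repr, PiLp.basisFun_apply,
    PiLp.toLp_apply]
  simp only [reflMap_apply]
  simp [Pi.single_apply]
  linear_combination -hαβ

/-- **Lemma 2.1(b).** If `r ≥ 3` and the lines `ℓ_{a_i, b_i}`, `i = 1, …, r`, all
lie in a common plane (2-dimensional affine subspace) of `ℝ³`, then there is an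
orientation-reversing isometry `T` of `ℝ²` (determinant of the linear part equal to
`-1`) with `T(a_i) = b_i` for all `i`; in particular `(a_i)` and `(b_i)` are
congruent. -/
theorem coplanar_lines_orientation_reversing_congruence
    (r : ℕ) (hr : 3 ≤ r) (a b : Fin r → Pt)
    (h : ∃ P : AffineSubspace ℝ (Pt × ℝ), Module.finrank ℝ P.direction = 2 ∧
      ∀ i : Fin r, lineOf (a i) (b i) ⊆ (P : Set (Pt × ℝ))) :
    ∃ T : Pt → Pt, IsIsometryWithDet (-1) T ∧ (∀ i : Fin r, T (a i) = b i) ∧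
      ∀ i j : Fin r, dist (a i) (a j) = dist (b i) (b j) := by
  classical
  obtain ⟨P, hdim, hsub⟩ := h
  set m : Fin r → Pt := fun i => (2⁻¹ : ℝ) • (a i + b i) with hm
  set v : Fin r → Pt := fun i => perp ((2⁻¹ : ℝ) • (a i - b i)) with hv
  have hq : ∀ i : Fin r, ∀ t : ℝ, (m i + t • v i, t) ∈ P := by
    intro i t
    exact hsub i ⟨t, rfl⟩
  -- the direction is a proper subspace
  have hDne : P.direction ≠ ⊤ := by
    intro hD
    rw [hD, finrank_top] at hdim
    rw [Module.finrank_prod, finrank_euclideanSpace_fin, Module.finrank_self] at hdim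
    omega
  obtain ⟨φ, hφne, hφD⟩ :=
    Submodule.exists_dual_map_eq_bot_of_lt_top (lt_top_iff_ne_top.mpr hDne) inferInstance
  have hφeq : ∀ x ∈ P, ∀ y ∈ P, φ x = φ y := by
    intro x hx y hy
    have h1 : x -ᵥ y ∈ P.direction := AffineSubspace.vsub_mem_direction hx hy
    have h2 : φ (x -ᵥ y) ∈ P.direction.map φ := Submodule.mem_map_of_mem h1
    rw [hφD, Submodule.mem_bot] at h2
    rw [vsub_eq_sub, map_sub] at h2
    linarith
  set ψ : Pt →ₗ[ℝ] ℝ := φ.comp (LinearMap.inl ℝ Pt ℝ) with hψ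
  set c : ℝ := φ (0, 1) with hc
  have hφval : ∀ (y : Pt) (t : ℝ), φ (y, t) = ψ y + t * c := by
    intro y t
    have : ((y, t) : Pt × ℝ) = (y, 0) + t • (0, 1) := by
      simp [Prod.ext_iff]
    rw [this, map_add, map_smul]
    simp [hψ, hc, smul_eq_mul]
  have i0 : Fin r := ⟨0, by omega⟩
  set d : ℝ := ψ (m i0) with hd
  -- key linear equations
  have hline : ∀ (i : Fin r) (t : ℝ), φ (m i + t • v i, t) = ψ (m i) + t * (ψ (v i) + c) := by
    intro i t
    simp only [hφval, map_add, map_smul, smul_eq_mul]; ring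
  have hvc : ∀ i : Fin r, ψ (v i) = -c := by
    intro i
    have h1 := hφeq _ (hq i 1) _ (hq i 0)
    rw [hline, hline] at h1
    simp at h1
    linarith
  have hmd : ∀ i : Fin r, ψ (m i) = d := by
    intro i
    have h1 := hφeq _ (hq i 0) _ (hq i0 0)
    rw [hline, hline] at h1
    simpa [hd] using h1
  -- ψ is nonzero
  have hψne : ψ ≠ 0 := by
    intro h0
    have hc0 : c = 0 := by
      have := hvc i0
      rw [h0] at this
      simpa using this.symm
    apply hφne
    apply LinearMap.ext
    rintro ⟨y, t⟩
    have := hφval y t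
    rw [h0, hc0] at this
    simpa using this
  set p : ℝ := ψ (EuclideanSpace.single 0 1 : Pt) with hp
  set q : ℝ := ψ (EuclideanSpace.single 1 1 : Pt) with hq'
  have hψval : ∀ y : Pt, ψ y = y 0 * p + y 1 * q := by
    intro y
    conv_lhs => rw [pt_decomp y]
    rw [map_add, map_smul, map_smul, smul_eq_mul, smul_eq_mul]
  have hS : p ^ 2 + q ^ 2 ≠ 0 := by
    intro h0
    have hp0 : p = 0 := by nlinarith [sq_nonneg p, sq_nonneg q]
    have hq0 : q = 0 := by nlinarith [sq_nonneg p, sq_nonneg q]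
    apply hψne
    ext y
    rw [hψval y, hp0, hq0]; simp
  -- coordinate equations
  have hvco : ∀ (i : Fin r) (j : Fin 2),
      v i j = ![-(2⁻¹ * (a i 1 - b i 1)), 2⁻¹ * (a i 0 - b i 0)] j := by
    intro i j
    fin_cases j <;>
      simp [hv, perp, PiLp.smul_apply, PiLp.sub_apply]
  have hmco : ∀ (i : Fin r) (j : Fin 2), m i j = 2⁻¹ * (a i j + b i j) := by
    intro i j
    simp [hm, PiLp.smul_apply, PiLp.add_apply]
    ring
  have E1 : ∀ i : Fin r,
      -(2⁻¹ * (a i 1 - b i 1)) * p + 2⁻¹ * (a i 0 - b i 0) * q = -c := by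
    intro i
    have := hvc i
    rw [hψval] at this
    rw [hvco i 0, hvco i 1] at this
    simpa using this
  have E2 : ∀ i : Fin r,
      2⁻¹ * (a i 0 + b i 0) * p + 2⁻¹ * (a i 1 + b i 1) * q = d := by
    intro i
    have := hmd i
    rw [hψval] at this
    rw [hmco i 0, hmco i 1] at this
    exact this
  -- normalize to a unit vector
  have hSpos : (0:ℝ) < p ^ 2 + q ^ 2 := by
    rcases lt_or_eq_of_le (by positivity : (0:ℝ) ≤ p ^ 2 + q ^ 2) with h' | h'
    · exact h'
    · exact absurd h'.symm hS
  obtain ⟨p1, q1, c1, d1, hn, E1', E2'⟩ :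
      ∃ p1 q1 c1 d1 : ℝ, p1 ^ 2 + q1 ^ 2 = 1 ∧
        (∀ i : Fin r, -(2⁻¹ * (a i 1 - b i 1)) * p1 + 2⁻¹ * (a i 0 - b i 0) * q1 = -c1) ∧
        (∀ i : Fin r, 2⁻¹ * (a i 0 + b i 0) * p1 + 2⁻¹ * (a i 1 + b i 1) * q1 = d1) := by
    have hs : (0:ℝ) < Real.sqrt (p ^ 2 + q ^ 2) := Real.sqrt_pos.mpr hSpos
    have hs2 : Real.sqrt (p ^ 2 + q ^ 2) ^ 2 = p ^ 2 + q ^ 2 := Real.sq_sqrt hSpos.le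
    refine ⟨p / Real.sqrt (p ^ 2 + q ^ 2), q / Real.sqrt (p ^ 2 + q ^ 2),
      c / Real.sqrt (p ^ 2 + q ^ 2), d / Real.sqrt (p ^ 2 + q ^ 2), ?_, ?_, ?_⟩
    · field_simp
      exact hs2.symm
    · intro i
      field_simp
      linear_combination 2 * E1 i
    · intro i
      field_simp
      linear_combination 2 * E2 i
  clear E1 E2 hS hSpos hψval hvc hmd hline hφval hφeq hvco hmco hψne hφne hφD hq hdim hsub hDne
  set α : ℝ := q1 ^ 2 - p1 ^ 2 with hα
  set β : ℝ := -(2 * p1 * q1) with hβ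
  have hαβ : α ^ 2 + β ^ 2 = 1 := by
    rw [hα, hβ]
    linear_combination (p1 ^ 2 + q1 ^ 2 + 1) * hn
  set w : Pt := WithLp.toLp 2 ![2 * d1 * p1 + 2 * c1 * q1, 2 * d1 * q1 - 2 * c1 * p1] with hw
  have hTa : ∀ i : Fin r, reflMap α β (a i) + w = b i := by
    intro i
    ext j
    show (reflMap α β (a i) + w) j = b i j
    rw [PiLp.add_apply, reflMap_apply]
    fin_cases j
    · show α * a i 0 + β * a i 1 + w 0 = b i 0
      rw [hα, hβ, hw]
      simp only [PiLp.toLp_apply, Matrix.cons_val_zero]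
      linear_combination (2 * q1) * E1' i + (-(2 * p1)) * E2' i + (b i 0) * hn
    · show β * a i 0 - α * a i 1 + w 1 = b i 1
      rw [hα, hβ, hw]
      simp only [PiLp.toLp_apply, Matrix.cons_val_one, Matrix.head_cons, Matrix.cons_val_zero]
      linear_combination (-(2 * p1)) * E1' i + (-(2 * q1)) * E2' i + (b i 1) * hn
  refine ⟨fun x => reflMap α β x + w, ⟨reflMap α β, w, reflMap_norm α β hαβ,
    reflMap_det α β hαβ, fun _ => rfl⟩, hTa, ?_⟩
  · intro i j
    rw [dist_eq_norm, dist_eq_norm, ← hTa i, ← hTa j]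
    rw [add_sub_add_right_eq_sub, ← map_sub]
    exact (reflMap_norm α β hαβ _).symm
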